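/- Let Y and S be standard Borel spaces, η a σ-finite diffuse measure on Y, (ρ(·|y))_{y∈Y} a measurable kernel of measures on S, ν(dy,ds) = η(dy)ρ(ds|y) the associated σ-finite measure on Y×S, h : S → (0,∞) measurable, N a Poisson random measure on Y×S with intensity ν, and μ the random measure on Y defined by μ(B) := ∫_{Y×S} 1_B(y)·h(s) N(dy,ds). Assume the first moment measure exists, i.e. ∫_S h(s) ρ(ds|y) < ∞ for η-a.e. y. Then μ is almost surely discrete: E[ μ({y ∈ Y : μ({y}) = 0}) ] = 0; equivalently, P-almost surely the random measure μ assigns zero mass to the set of points that are not atoms of μ. -/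

import Mathlib

open MeasureTheory ProbabilityTheory ENNReal

namespace PoissonAuxDiscrete
open Set

/-- `x : ℝ≥0∞` is a natural number. -/
def NatVal (x : ℝ≥0∞) : Prop := ∃ n : ℕ, x = n

lemma natVal_zero : NatVal 0 := ⟨0, by simp⟩

lemma NatVal.ne_top {x : ℝ≥0∞} (h : NatVal x) : x ≠ ∞ := by
  obtain ⟨n, rfl⟩ := h; simp

lemma NatVal.one_le {x : ℝ≥0∞} (h : NatVal x) (hx : x ≠ 0) : 1 ≤ x := by
  obtain ⟨n, rfl⟩ := h
  have hn : n ≠ 0 := by rintro rfl; simp at hx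
  exact_mod_cast Nat.one_le_iff_ne_zero.2 hn

lemma natVal_sub {a b : ℝ≥0∞} (ha : NatVal a) (hb : NatVal b) : NatVal (a - b) := by
  obtain ⟨m, rfl⟩ := ha; obtain ⟨n, rfl⟩ := hb
  rcases le_total (n : ℝ≥0∞) (m : ℝ≥0∞) with hle | hle
  · have hnm : n ≤ m := by exact_mod_cast hle
    refine ⟨m - n, ?_⟩
    refine ENNReal.sub_eq_of_eq_add (by simp) ?_
    exact_mod_cast (Nat.sub_add_cancel hnm).symm
  · exact ⟨0, by simpa using tsub_eq_zero_of_le hle⟩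

lemma natVal_iSup {ι : Sort*} (f : ι → ℝ≥0∞) (h : ∀ i, NatVal (f i))
    (hb : (⨆ i, f i) ≠ ∞) : NatVal (⨆ i, f i) := by
  rcases isEmpty_or_nonempty ι with hι | hι
  · rw [iSup_of_empty]; exact natVal_zero
  · choose a ha using h
    obtain ⟨nb, hnb⟩ := ENNReal.exists_nat_gt hb
    have hbdd : BddAbove (Set.range a) := by
      refine ⟨nb, ?_⟩
      rintro n ⟨i, rfl⟩
      have h1 : (a i : ℝ≥0∞) < nb := lt_of_le_of_lt ((ha i) ▸ le_iSup f i) hnb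
      exact (Nat.cast_lt.1 h1).le
    obtain ⟨i0, hi0⟩ := Nat.sSup_mem (Set.range_nonempty a) hbdd
    refine ⟨sSup (Set.range a), le_antisymm ?_ ?_⟩
    · refine iSup_le fun i => ?_
      rw [ha i]
      exact_mod_cast Nat.cast_le.2 (le_csSup hbdd (Set.mem_range_self i))
    · calc ((sSup (Set.range a) : ℕ) : ℝ≥0∞) = ((a i0 : ℕ) : ℝ≥0∞) := by rw [hi0]
        _ = f i0 := (ha i0).symm
        _ ≤ ⨆ i, f i := le_iSup f i0

lemma natVal_iInf {ι : Sort*} [Nonempty ι] (f : ι → ℝ≥0∞) (h : ∀ i, NatVal (f i)) :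
    NatVal (⨅ i, f i) := by
  choose a ha using h
  obtain ⟨i0, hi0⟩ := Nat.sInf_mem (Set.range_nonempty a)
  refine ⟨sInf (Set.range a), le_antisymm ?_ ?_⟩
  · calc ⨅ i, f i ≤ f i0 := iInf_le f i0
      _ = ((a i0 : ℕ) : ℝ≥0∞) := ha i0
      _ = ((sInf (Set.range a) : ℕ) : ℝ≥0∞) := by rw [hi0]
  · refine le_iInf fun i => ?_
    rw [ha i]
    exact_mod_cast Nat.cast_le.2 (Nat.sInf_le (Set.mem_range_self i))

lemma natVal_sum {ι : Type*} (s : Finset ι) (f : ι → ℝ≥0∞) (h : ∀ i, NatVal (f i)) :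
    NatVal (∑ i ∈ s, f i) := by
  choose a ha using h
  refine ⟨∑ i ∈ s, a i, ?_⟩
  rw [Nat.cast_sum]
  exact Finset.sum_congr rfl fun i _ => ha i

lemma natVal_tsum {ι : Type*} (f : ι → ℝ≥0∞) (h : ∀ i, NatVal (f i))
    (hb : (∑' i, f i) ≠ ∞) : NatVal (∑' i, f i) := by
  rw [ENNReal.tsum_eq_iSup_sum]
  exact natVal_iSup _ (fun s => natVal_sum s f h)
    (by rw [← ENNReal.tsum_eq_iSup_sum]; exact hb)

lemma measure_countable_eq_tsum {α : Type*} [MeasurableSpace α] [MeasurableSingletonClass α]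
    (μ : Measure α) {s : Set α} (hs : s.Countable) : μ s = ∑' x : s, μ {(x : α)} := by
  have h1 : s = ⋃ x ∈ s, {x} := by simp
  conv_lhs => rw [h1]
  rw [measure_biUnion hs ?_ (fun b _ => measurableSet_singleton b)]
  intro x _ y _ hxy
  simp only [Function.onFun]
  exact disjoint_singleton.2 hxy



lemma exists_countable_support (m : Measure ℝ) [IsFiniteMeasure m]
    (hm : ∀ q : ℚ, NatVal (m (Set.Iic (q : ℝ)))) :
    ∃ T : Set ℝ, T.Countable ∧ m Tᶜ = 0 := by
  -- `m (Iic x)` is a natural number for every real `x`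
  have hIic : ∀ x : ℝ, m (Set.Iic x)
      = ⨅ q : {q : ℚ // x < (q : ℝ)}, m (Set.Iic (q : ℝ)) := by
    intro x
    have hset : Set.Iic x = ⋂ q : {q : ℚ // x < (q : ℝ)}, Set.Iic ((q : ℚ) : ℝ) := by
      ext y
      simp only [mem_Iic, mem_iInter]
      constructor
      · rintro hyx ⟨q, hq⟩; exact hyx.trans hq.le
      · intro hall
        by_contra hxy
        push_neg at hxy
        obtain ⟨q, hq1, hq2⟩ := exists_rat_btwn hxy
        exact absurd (hall ⟨q, hq1⟩) (not_le.2 hq2)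
    haveI : Nonempty {q : ℚ // x < (q : ℝ)} := by
      obtain ⟨q, hq⟩ := exists_rat_gt x; exact ⟨⟨q, hq⟩⟩
    rw [hset]
    have hdir : Directed (· ⊇ ·) fun q : {q : ℚ // x < (q : ℝ)} => Set.Iic ((q : ℚ) : ℝ) := by
      rintro ⟨q1, hq1⟩ ⟨q2, hq2⟩
      refine ⟨⟨min q1 q2, by push_cast; exact lt_min hq1 hq2⟩, ?_, ?_⟩
      · intro y hy
        simp only [mem_Iic] at hy ⊢
        exact hy.trans (by push_cast; exact min_le_left _ _)
      · intro y hy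
        simp only [mem_Iic] at hy ⊢
        exact hy.trans (by push_cast; exact min_le_right _ _)
    exact hdir.measure_iInter (fun q => measurableSet_Iic.nullMeasurableSet)
      ⟨Classical.arbitrary _, measure_ne_top _ _⟩
  have hIicNat : ∀ x : ℝ, NatVal (m (Set.Iic x)) := by
    intro x
    haveI : Nonempty {q : ℚ // x < (q : ℝ)} := by
      obtain ⟨q, hq⟩ := exists_rat_gt x; exact ⟨⟨q, hq⟩⟩
    rw [hIic x]
    exact natVal_iInf _ fun q => hm _
  -- `m (Iio x)` is a natural number
  have hIio : ∀ x : ℝ, NatVal (m (Set.Iio x)) := by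
    intro x
    have hset : Set.Iio x = ⋃ q : {q : ℚ // (q : ℝ) < x}, Set.Iic ((q : ℚ) : ℝ) := by
      ext y
      simp only [mem_Iio, mem_iUnion, mem_Iic]
      constructor
      · intro hyx
        obtain ⟨q, hq1, hq2⟩ := exists_rat_btwn hyx
        exact ⟨⟨q, hq2⟩, hq1.le⟩
      · rintro ⟨⟨q, hq⟩, hyq⟩; exact lt_of_le_of_lt hyq hq
    have hdir : Directed (· ⊆ ·) fun q : {q : ℚ // (q : ℝ) < x} => Set.Iic ((q : ℚ) : ℝ) := by
      rintro ⟨q1, hq1⟩ ⟨q2, hq2⟩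
      refine ⟨⟨max q1 q2, by push_cast; exact max_lt hq1 hq2⟩, ?_, ?_⟩
      · intro y hy
        simp only [mem_Iic] at hy ⊢
        exact hy.trans (by push_cast; exact le_max_left _ _)
      · intro y hy
        simp only [mem_Iic] at hy ⊢
        exact hy.trans (by push_cast; exact le_max_right _ _)
    rw [hset, hdir.measure_iUnion]
    refine natVal_iSup _ (fun q => hm _) ?_
    refine ne_top_of_le_ne_top (measure_ne_top m univ) (iSup_le fun q => ?_)
    exact measure_mono (subset_univ _)
  -- singletons
  have hIicIio : ∀ x : ℝ, ({x} : Set ℝ) = Set.Iic x \ Set.Iio x := by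
    intro x; ext y
    simp only [mem_singleton_iff, mem_diff, mem_Iic, mem_Iio, not_lt]
    constructor
    · rintro rfl; exact ⟨le_rfl, le_rfl⟩
    · rintro ⟨h1, h2⟩; exact le_antisymm h1 h2
  have hsing : ∀ x : ℝ, NatVal (m {x}) := by
    intro x
    rw [hIicIio x, measure_diff Iio_subset_Iic_self measurableSet_Iio.nullMeasurableSet
      (measure_ne_top _ _)]
    exact natVal_sub (hIicNat x) (hIio x)
  -- the set of atoms
  set T : Set ℝ := {x | m {x} ≠ 0} with hT
  have hTc : T.Countable := by
    have := Measure.countable_meas_pos_of_disjoint_iUnion (μ := m)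
      (As := fun x : ℝ => {x}) (fun x => measurableSet_singleton x) ?_
    · refine this.mono fun x hx => ?_
      exact pos_iff_ne_zero.2 hx
    · intro x y hxy
      simp only [Function.onFun]
      exact disjoint_singleton.2 hxy
  refine ⟨T, hTc, ?_⟩
  set m2 : Measure ℝ := m.restrict Tᶜ with hm2
  haveI : IsFiniteMeasure m2 := by
    constructor
    rw [hm2, Measure.restrict_apply_univ]
    exact measure_lt_top m _
  -- `m2 (Iic x)` is a natural number
  have hF2 : ∀ x : ℝ, NatVal (m2 (Set.Iic x)) := by
    intro x
    have he : Set.Iic x ∩ Tᶜ = Set.Iic x \ (Set.Iic x ∩ T) := by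
      ext y; simp only [mem_inter_iff, mem_compl_iff, mem_diff]; tauto
    rw [hm2, Measure.restrict_apply measurableSet_Iic, he,
      measure_diff inter_subset_left
        ((measurableSet_Iic.inter hTc.measurableSet).nullMeasurableSet) (measure_ne_top _ _)]
    refine natVal_sub (hIicNat x) ?_
    have hcnt : (Set.Iic x ∩ T).Countable := hTc.mono inter_subset_right
    rw [measure_countable_eq_tsum m hcnt]
    refine natVal_tsum _ (fun y => hsing _) ?_
    rw [← measure_countable_eq_tsum m hcnt]
    exact measure_ne_top _ _
  -- `m2` has no atoms
  have hsing2 : ∀ x : ℝ, m2 {x} = 0 := by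
    intro x
    rw [hm2, Measure.restrict_apply (measurableSet_singleton x)]
    by_cases hx : x ∈ T
    · rw [Set.singleton_inter_eq_empty.2 (by simpa using hx)]
      simp
    · refine le_antisymm (le_trans (measure_mono inter_subset_left) ?_) zero_le
      simp only [hT, mem_setOf_eq, not_not] at hx
      exact hx.le
  -- main claim : m2 univ = 0
  have hkey : m2 univ = 0 := by
    by_contra hne
    have hex : ∃ x : ℝ, m2 (Set.Iic x) ≠ 0 := by
      by_contra h0
      push_neg at h0
      refine hne (le_antisymm ?_ zero_le)
      have hsub : (univ : Set ℝ) ⊆ ⋃ n : ℕ, Set.Iic (n : ℝ) := by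
        intro y _
        obtain ⟨n, hn⟩ := exists_nat_ge y
        exact mem_iUnion.2 ⟨n, hn⟩
      refine (measure_mono hsub).trans ((measure_iUnion_le _).trans ?_)
      simp [h0]
    set E : Set ℝ := {x | m2 (Set.Iic x) = 0} with hE
    by_cases hEne : E.Nonempty
    swap
    · -- E empty
      have h1 : ∀ x : ℝ, 1 ≤ m2 (Set.Iic x) := fun x =>
        (hF2 x).one_le fun hc => hEne ⟨x, hc⟩
      have hempty : (∅ : Set ℝ) = ⋂ n : ℕ, Set.Iic (-(n : ℝ)) := by
        ext y
        simp only [mem_empty_iff_false, mem_iInter, mem_Iic, false_iff, not_forall, not_le]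
        obtain ⟨n, hn⟩ := exists_nat_gt (-y)
        exact ⟨n, by linarith⟩
      have h2 : m2 (⋂ n : ℕ, Set.Iic (-(n : ℝ))) = ⨅ n : ℕ, m2 (Set.Iic (-(n : ℝ))) := by
        refine Antitone.measure_iInter ?_ (fun n => measurableSet_Iic.nullMeasurableSet)
          ⟨0, measure_ne_top _ _⟩
        intro i j hij
        refine Iic_subset_Iic.2 ?_
        simp only [neg_le_neg_iff, Nat.cast_le]
        exact hij
      have : (1 : ℝ≥0∞) ≤ 0 := by
        calc (1 : ℝ≥0∞) ≤ ⨅ n : ℕ, m2 (Set.Iic (-(n : ℝ))) := le_iInf fun n => h1 _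
          _ = m2 (⋂ n : ℕ, Set.Iic (-(n : ℝ))) := h2.symm
          _ = m2 ∅ := by rw [← hempty]
          _ = 0 := measure_empty
      exact absurd this (by simp)
    by_cases hEbdd : BddAbove E
    swap
    · -- E unbounded above
      obtain ⟨x, hx⟩ := hex
      obtain ⟨y, hyE, hxy⟩ := not_bddAbove_iff.1 hEbdd x
      exact hx (le_antisymm ((measure_mono (Iic_subset_Iic.2 hxy.le)).trans_eq hyE) zero_le)
    set x0 : ℝ := sSup E with hx0
    have hlt : ∀ x < x0, m2 (Set.Iic x) = 0 := by
      intro x hx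
      obtain ⟨e, heE, hxe⟩ := exists_lt_of_lt_csSup hEne hx
      exact le_antisymm ((measure_mono (Iic_subset_Iic.2 hxe.le)).trans_eq heE) zero_le
    have hgt : ∀ x, x0 < x → 1 ≤ m2 (Set.Iic x) := by
      intro x hx
      refine (hF2 x).one_le fun h0 => ?_
      exact absurd (le_csSup hEbdd h0) (not_le.2 hx)
    have hIio0 : m2 (Set.Iio x0) = 0 := by
      have hsub : Set.Iio x0 ⊆ ⋃ n : ℕ, Set.Iic (x0 - 1 / (n + 1)) := by
        intro y hy
        obtain ⟨n, hn⟩ := exists_nat_one_div_lt (show (0:ℝ) < x0 - y by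
          simp only [mem_Iio] at hy; linarith)
        exact mem_iUnion.2 ⟨n, by simp only [mem_Iic]; linarith⟩
      refine le_antisymm ((measure_mono hsub).trans ((measure_iUnion_le _).trans ?_)) zero_le
      have h0 : ∀ n : ℕ, m2 (Set.Iic (x0 - 1 / ((n:ℝ) + 1))) = 0 := by
        intro n
        refine hlt _ (sub_lt_self x0 (by positivity))
      exact le_of_eq (ENNReal.tsum_eq_zero.2 h0)
    have hIic1 : 1 ≤ m2 (Set.Iic x0) := by
      have heq : Set.Iic x0 = ⋂ n : ℕ, Set.Iic (x0 + 1 / (n + 1)) := by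
        ext y
        simp only [mem_Iic, mem_iInter, mem_Iic]
        constructor
        · intro hyx n
          have : (0 : ℝ) < 1 / ((n : ℝ) + 1) := by positivity
          linarith
        · intro hall
          by_contra hxy
          push_neg at hxy
          obtain ⟨n, hn⟩ := exists_nat_one_div_lt (show (0:ℝ) < y - x0 by linarith)
          have := hall n
          push_cast at this hn
          linarith
      rw [heq, Antitone.measure_iInter ?_ (fun n => measurableSet_Iic.nullMeasurableSet)
        ⟨0, measure_ne_top _ _⟩]
      · refine le_iInf fun n => hgt _ ?_
        exact lt_add_of_pos_right _ (by positivity)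
      · intro i j hij
        refine Iic_subset_Iic.2 ?_
        have hc : ((i : ℝ)) ≤ (j : ℝ) := Nat.cast_le.2 hij
        have h1 : 1 / ((j : ℝ) + 1) ≤ 1 / ((i : ℝ) + 1) := by
          apply one_div_le_one_div_of_le
          · positivity
          · linarith
        linarith
    have hx0atom : (1 : ℝ≥0∞) ≤ m2 {x0} := by
      rw [hIicIio x0, measure_diff Iio_subset_Iic_self measurableSet_Iio.nullMeasurableSet
        (measure_ne_top _ _), hIio0, tsub_zero]
      exact hIic1
    rw [hsing2 x0] at hx0atom
    exact absurd hx0atom (by simp)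
  rw [hm2, Measure.restrict_apply_univ] at hkey
  exact hkey



lemma poisson_tsum (t : ℝ≥0∞) (ht : t ≠ ∞) :
    ∑' k : ℕ, ENNReal.ofReal (Real.exp (-t.toReal)) * t ^ k / (Nat.factorial k) = 1 := by
  set r : ℝ := t.toReal with hr
  have hr0 : 0 ≤ r := ENNReal.toReal_nonneg
  have htr : t = ENNReal.ofReal r := (ENNReal.ofReal_toReal ht).symm
  have hterm : ∀ k : ℕ, ENNReal.ofReal (Real.exp (-r)) * t ^ k / (Nat.factorial k)
      = ENNReal.ofReal (Real.exp (-r) * (r ^ k / (Nat.factorial k))) := by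
    intro k
    rw [ENNReal.ofReal_mul (Real.exp_nonneg _), ENNReal.ofReal_div_of_pos (by positivity),
      ENNReal.ofReal_pow hr0, ← htr, ENNReal.ofReal_natCast, mul_div_assoc]
  simp_rw [hterm]
  have hsum : Summable fun k : ℕ => Real.exp (-r) * (r ^ k / (Nat.factorial k)) :=
    (Real.summable_pow_div_factorial r).mul_left _
  rw [← ENNReal.ofReal_tsum_of_nonneg (fun k => by positivity) hsum]
  have : ∑' k : ℕ, Real.exp (-r) * (r ^ k / (Nat.factorial k)) = 1 := by
    rw [tsum_mul_left]
    have hexp : ∑' k : ℕ, r ^ k / (Nat.factorial k : ℝ) = Real.exp r := by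
      rw [Real.exp_eq_exp_ℝ, NormedSpace.exp_eq_tsum_div]
    rw [hexp, ← Real.exp_add]
    simp
  rw [this, ENNReal.ofReal_one]

end PoissonAuxDiscrete

/-- `N` is a Poisson random measure on `X` with intensity `ν`, on the probability space `(Ω, P)`. -/
def IsPoissonRM {X Ω : Type*} [MeasurableSpace X] [MeasurableSpace Ω]
    (P : Measure Ω) (ν : Measure X) (N : Ω → Measure X) : Prop :=
  Measurable N ∧
  (∀ A : Set X, MeasurableSet A → ν A < ∞ → ∀ k : ℕ,
      P {ω | N ω A = k} =
        ENNReal.ofReal (Real.exp (-(ν A).toReal)) * (ν A) ^ k / (Nat.factorial k)) ∧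
  ∀ (m : ℕ) (A : Fin m → Set X), (∀ i, MeasurableSet (A i)) →
      (Pairwise fun i j => Disjoint (A i) (A j)) →
      iIndepFun (fun i ω => N ω (A i)) P

/-- The size-biased random measure `μ(B) = ∫ 1_B(y) h(s) m(dy,ds)`. -/
noncomputable def sizeBiased {Y S : Type*} [MeasurableSpace Y] [MeasurableSpace S]
    (h : S → NNReal) (m : Measure (Y × S)) : Measure Y :=
  (m.withDensity fun q => (h q.2 : ℝ≥0∞)).map Prod.fst

namespace PoissonAuxDiscrete
open Set

lemma ae_natVal {X Ω : Type*} [MeasurableSpace X] [MeasurableSpace Ω] {P : Measure Ω}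
    [IsProbabilityMeasure P] {ν : Measure X} {N : Ω → Measure X} (hN : IsPoissonRM P ν N)
    {A : Set X} (hA : MeasurableSet A) (hfin : ν A < ∞) :
    ∀ᵐ ω ∂P, NatVal (N ω A) := by
  have hmeas : Measurable fun ω => N ω A := (Measure.measurable_coe hA).comp hN.1
  have hsets : ∀ k : ℕ, MeasurableSet {ω | N ω A = (k : ℝ≥0∞)} :=
    fun k => hmeas (measurableSet_singleton _)
  have hdisj : Pairwise (Function.onFun Disjoint fun k : ℕ => {ω | N ω A = (k : ℝ≥0∞)}) := by
    intro i j hij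
    simp only [Function.onFun, Set.disjoint_left]
    rintro ω hi hj
    exact hij (by exact_mod_cast (hi.symm.trans hj : ((i : ℝ≥0∞)) = j))
  have hU : P (⋃ k : ℕ, {ω | N ω A = (k : ℝ≥0∞)}) = 1 := by
    rw [measure_iUnion hdisj hsets]
    have := fun k : ℕ => hN.2.1 A hA hfin k
    simp_rw [this]
    exact poisson_tsum _ hfin.ne
  have heq : (⋃ k : ℕ, {ω | N ω A = (k : ℝ≥0∞)}) = {ω | NatVal (N ω A)} := by
    ext ω
    simp only [Set.mem_iUnion, Set.mem_setOf_eq, NatVal]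
  rw [heq] at hU
  have hms : MeasurableSet {ω | NatVal (N ω A)} := heq ▸ MeasurableSet.iUnion hsets
  rw [Filter.eventually_iff, mem_ae_iff]
  rw [show {ω | NatVal (N ω A)}ᶜ = {ω | NatVal (N ω A)}ᶜ from rfl]
  exact (prob_compl_eq_zero_iff hms).2 hU

end PoissonAuxDiscrete

open PoissonAuxDiscrete Set

/-- Proposition 3.3 (almost sure discreteness): if the size-biased random measure
`μ(B) = ∫ 1_B(y)h(s) N(dy,ds)` built from a Poisson process with intensity `η(dy)ρ(ds|y)`
(`η` σ-finite diffuse) has a first moment measure, then `μ` is almost surely discrete: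
`E[μ({y : μ({y}) = 0})] = 0`. -/
theorem sizeBiased_as_discrete
    {Y S Ω : Type*} [MeasurableSpace Y] [StandardBorelSpace Y]
    [MeasurableSpace S] [StandardBorelSpace S] [MeasurableSpace Ω]
    (P : Measure Ω) [IsProbabilityMeasure P]
    (η : Measure Y) [SigmaFinite η] (hdiff : ∀ y : Y, η {y} = 0)
    (ρ : Kernel Y S) [IsSFiniteKernel ρ]
    (h : S → NNReal) (hh : Measurable h) (hpos : ∀ s, 0 < h s)
    (N : Ω → Measure (Y × S)) (hN : IsPoissonRM P (η ⊗ₘ ρ) N)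
    (hmom : ∀ᵐ y ∂η, ∫⁻ s, (h s : ℝ≥0∞) ∂(ρ y) < ∞) :
    ∫⁻ ω, sizeBiased h (N ω) {y | sizeBiased h (N ω) {y} = 0} ∂P = 0 := by
  classical
  -- the measurable embedding of `Y × S` into `ℝ`
  set f : Y × S → ℝ := MeasureTheory.embeddingReal (Y × S) with hfdef
  have hf : MeasurableEmbedding f := MeasureTheory.measurableEmbedding_embeddingReal (Y × S)
  -- measurability of the density and of the first-moment function
  have hgm : Measurable fun q : Y × S => (h q.2 : ℝ≥0∞) :=
    measurable_coe_nnreal_ennreal.comp (hh.comp measurable_snd)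
  have hint_meas : Measurable fun y => ∫⁻ s, (h s : ℝ≥0∞) ∂ρ y :=
    Measurable.lintegral_kernel_prod_right (κ := ρ) (f := fun _ s => ((h s : ℝ≥0∞))) hgm
  -- a measurable co-null set on which the first moment is finite
  set Z : Set Y := toMeasurable η {y | ∫⁻ s, (h s : ℝ≥0∞) ∂ρ y < ∞}ᶜ with hZdef
  have hZm : MeasurableSet Z := measurableSet_toMeasurable _ _
  have hZ0 : η Z = 0 := by
    rw [hZdef, measure_toMeasurable]
    rw [Filter.eventually_iff, mem_ae_iff] at hmom
    exact hmom
  -- the pieces of finite intensity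
  set B : ℕ × ℕ → Set Y := fun jm =>
    (Zᶜ ∩ {y | ∫⁻ s, (h s : ℝ≥0∞) ∂ρ y ≤ (jm.1 : ℝ≥0∞)}) ∩ spanningSets η jm.2 with hBdef
  set Sk : ℕ → Set S := fun k => {s | ((k : ℝ≥0∞))⁻¹ < (h s : ℝ≥0∞)} with hSkdef
  set C : ℕ × ℕ × ℕ → Set (Y × S) := fun i => B (i.2.1, i.2.2) ×ˢ Sk i.1 with hCdef
  have hBm : ∀ jm, MeasurableSet (B jm) := by
    intro jm
    exact ((hZm.compl.inter (hint_meas measurableSet_Iic)).inter (measurableSet_spanningSets η jm.2))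
  have hSkm : ∀ k, MeasurableSet (Sk k) := by
    intro k
    exact (measurable_coe_nnreal_ennreal.comp hh) measurableSet_Ioi
  have hCm : ∀ i, MeasurableSet (C i) := fun i => (hBm _).prod (hSkm _)
  -- finiteness of the intensity of the pieces
  have hC_fin : ∀ i, (η ⊗ₘ ρ) (C i) < ∞ := by
    rintro ⟨k, j, m⟩
    rw [hCdef]
    rw [Measure.compProd_apply_prod (hBm _) (hSkm _)]
    calc ∫⁻ y in B (j, m), ρ y (Sk k) ∂η
        ≤ ∫⁻ _ in B (j, m), (k : ℝ≥0∞) * j ∂η := by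
          refine setLIntegral_mono' (hBm _) fun y hy => ?_
          have h1 : ρ y (Sk k) ≤ (k : ℝ≥0∞) * ∫⁻ s, (h s : ℝ≥0∞) ∂ρ y := by
            calc ρ y (Sk k) = ∫⁻ _ in Sk k, 1 ∂ρ y := (setLIntegral_one _).symm
              _ ≤ ∫⁻ s in Sk k, (k : ℝ≥0∞) * (h s : ℝ≥0∞) ∂ρ y := by
                  refine setLIntegral_mono' (hSkm k) fun s hs => ?_
                  have hs' : ((k : ℝ≥0∞))⁻¹ < (h s : ℝ≥0∞) := hs
                  rcases Nat.eq_zero_or_pos k with rfl | hk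
                  · exact absurd hs' (by simp)
                  · have hkne : (k : ℝ≥0∞) ≠ 0 := by exact_mod_cast hk.ne'
                    calc (1 : ℝ≥0∞) = (k : ℝ≥0∞) * ((k : ℝ≥0∞))⁻¹ :=
                          (ENNReal.mul_inv_cancel hkne (by simp)).symm
                      _ ≤ (k : ℝ≥0∞) * (h s : ℝ≥0∞) := mul_le_mul_right hs'.le _
              _ ≤ ∫⁻ s, (k : ℝ≥0∞) * (h s : ℝ≥0∞) ∂ρ y := setLIntegral_le_lintegral _ _
              _ = (k : ℝ≥0∞) * ∫⁻ s, (h s : ℝ≥0∞) ∂ρ y := lintegral_const_mul _ (hh.coe_nnreal_ennreal)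
          have h2 : ∫⁻ s, (h s : ℝ≥0∞) ∂ρ y ≤ (j : ℝ≥0∞) := hy.1.2
          exact h1.trans (mul_le_mul_right h2 _)
      _ = (k : ℝ≥0∞) * j * η (B (j, m)) := setLIntegral_const _ _
      _ ≤ (k : ℝ≥0∞) * j * η (spanningSets η m) := by
          exact mul_le_mul_right (measure_mono inter_subset_right) _
      _ < ∞ := by
          refine ENNReal.mul_lt_top ?_ (measure_spanningSets_lt_top η m)
          exact ENNReal.mul_lt_top (by simp) (by simp)
  -- the bad vertical strip has intensity zero
  set W : Set (Y × S) := Z ×ˢ (univ : Set S) with hWdef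
  have hWm : MeasurableSet W := hZm.prod MeasurableSet.univ
  have hW0 : (η ⊗ₘ ρ) W = 0 := by
    rw [hWdef, Measure.compProd_apply_prod hZm MeasurableSet.univ]
    exact setLIntegral_measure_zero _ _ hZ0
  -- the pieces together with `W` cover everything
  have hcover : ∀ p : Y × S, p ∈ W ∪ ⋃ i, C i := by
    rintro ⟨y, s⟩
    by_cases hy : y ∈ Z
    · exact Or.inl ⟨hy, mem_univ s⟩
    · right
      have hy0 : ∫⁻ s, (h s : ℝ≥0∞) ∂ρ y < ∞ := by
        by_contra hc
        exact hy (subset_toMeasurable η _ hc)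
      obtain ⟨j, hj⟩ := ENNReal.exists_nat_gt hy0.ne
      obtain ⟨m, hm⟩ : ∃ m, y ∈ spanningSets η m := by
        have : y ∈ ⋃ m, spanningSets η m := by
          rw [iUnion_spanningSets]; exact mem_univ y
        exact mem_iUnion.1 this
      obtain ⟨k, hk⟩ := ENNReal.exists_inv_nat_lt
        (show (h s : ℝ≥0∞) ≠ 0 by exact_mod_cast (hpos s).ne')
      exact mem_iUnion.2 ⟨(k, j, m), ⟨⟨⟨hy, hj.le⟩, hm⟩, hk⟩⟩
  -- the almost sure events
  have hae1 : ∀ᵐ ω ∂P, N ω W = 0 := by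
    have hP : P {ω | N ω W = ((0 : ℕ) : ℝ≥0∞)} = 1 := by
      rw [hN.2.1 W hWm (by rw [hW0]; exact ENNReal.zero_lt_top) 0, hW0]
      simp [Real.exp_zero]
    have hms : MeasurableSet {ω | N ω W = ((0 : ℕ) : ℝ≥0∞)} :=
      ((Measure.measurable_coe hWm).comp hN.1) (measurableSet_singleton _)
    have := (prob_compl_eq_zero_iff hms).2 hP
    rw [Filter.eventually_iff, mem_ae_iff]
    convert this using 2
    ext ω
    simp
  have hae2 : ∀ᵐ ω ∂P, ∀ i, NatVal (N ω (C i)) :=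
    (ae_all_iff).2 fun i => ae_natVal hN (hCm i) (hC_fin i)
  have hae3 : ∀ᵐ ω ∂P, ∀ i, ∀ q : ℚ, NatVal (N ω (f ⁻¹' Set.Iic (q : ℝ) ∩ C i)) := by
    refine (ae_all_iff).2 fun i => (ae_all_iff).2 fun q => ?_
    exact ae_natVal hN ((hf.measurable measurableSet_Iic).inter (hCm i))
      ((measure_mono inter_subset_right).trans_lt (hC_fin i))
  -- pointwise conclusion
  have key : ∀ᵐ ω ∂P, sizeBiased h (N ω) {y | sizeBiased h (N ω) {y} = 0} = 0 := by
    filter_upwards [hae1, hae2, hae3] with ω h1 h2 h3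
    -- each piece is carried by a countable set
    have hpiece : ∀ i, ∃ T : Set (Y × S), T.Countable ∧ N ω (C i \ T) = 0 := by
      intro i
      obtain ⟨n, hn⟩ := h2 i
      set mi : Measure ℝ := ((N ω).restrict (C i)).map f with hmi
      haveI : IsFiniteMeasure mi := by
        constructor
        rw [hmi, Measure.map_apply hf.measurable MeasurableSet.univ, preimage_univ,
          Measure.restrict_apply_univ, hn]
        exact ENNReal.natCast_lt_top n
      have hmiq : ∀ q : ℚ, NatVal (mi (Set.Iic (q : ℝ))) := by
        intro q
        rw [hmi, Measure.map_apply hf.measurable measurableSet_Iic,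
          Measure.restrict_apply (hf.measurable measurableSet_Iic)]
        exact h3 i q
      obtain ⟨T0, hT0c, hT0⟩ := exists_countable_support mi hmiq
      refine ⟨f ⁻¹' T0, hT0c.preimage hf.injective, ?_⟩
      rw [hmi, Measure.map_apply hf.measurable hT0c.measurableSet.compl,
        Measure.restrict_apply (hf.measurable hT0c.measurableSet.compl)] at hT0
      rw [show C i \ f ⁻¹' T0 = f ⁻¹' T0ᶜ ∩ C i by
        rw [preimage_compl]; exact diff_eq_compl_inter]
      exact hT0
    choose T hTc hT0 using hpiece
    set TY : Set Y := ⋃ i, Prod.fst '' T i with hTYdef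
    have hTYc : TY.Countable := countable_iUnion fun i => (hTc i).image _
    have hNTc : N ω (Prod.fst ⁻¹' TYᶜ) = 0 := by
      have hsub : Prod.fst ⁻¹' TYᶜ ⊆ W ∪ ⋃ i, (C i \ T i) := by
        intro p hp
        rcases hcover p with hw | hc
        · exact Or.inl hw
        · obtain ⟨i, hi⟩ := mem_iUnion.1 hc
          refine Or.inr (mem_iUnion.2 ⟨i, hi, fun hmem => ?_⟩)
          exact hp (mem_iUnion.2 ⟨i, mem_image_of_mem Prod.fst hmem⟩)
      refine le_antisymm ((measure_mono hsub).trans ?_) zero_le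
      calc N ω (W ∪ ⋃ i, (C i \ T i)) ≤ N ω W + N ω (⋃ i, (C i \ T i)) := measure_union_le _ _
        _ ≤ 0 + ∑' i, N ω (C i \ T i) := by
            rw [h1]; exact add_le_add le_rfl (measure_iUnion_le _)
        _ = 0 := by simp [hT0]
    have hμTc : sizeBiased h (N ω) TYᶜ = 0 := by
      rw [sizeBiased, Measure.map_apply measurable_fst hTYc.measurableSet.compl,
        withDensity_apply _ (measurable_fst hTYc.measurableSet.compl)]
      exact setLIntegral_measure_zero _ _ hNTc
    set A : Set Y := {y | sizeBiased h (N ω) {y} = 0} with hAdef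
    have hsubA : A ⊆ (A ∩ TY) ∪ TYᶜ := by
      intro y hy
      by_cases hyT : y ∈ TY
      · exact Or.inl ⟨hy, hyT⟩
      · exact Or.inr hyT
    refine le_antisymm ?_ zero_le
    refine (measure_mono hsubA).trans ?_
    refine (measure_union_le _ _).trans ?_
    rw [hμTc, add_zero]
    have hcnt : (A ∩ TY).Countable := hTYc.mono inter_subset_right
    rw [measure_countable_eq_tsum (sizeBiased h (N ω)) hcnt]
    refine le_of_eq (ENNReal.tsum_eq_zero.2 fun y => ?_)
    exact y.2.1
  calc ∫⁻ ω, sizeBiased h (N ω) {y | sizeBiased h (N ω) {y} = 0} ∂P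
      = ∫⁻ _, 0 ∂P := lintegral_congr_ae key
    _ = 0 := lintegral_zero
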